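/- arXiv:1708.00029 — 4 statements merged into one kernel-verified Lean document; each statement's English description precedes it below -/
import Mathlib

section
/- Let {μ_l}_{l=1}^s and {ν_l}_{l=1}^t be two finite sequences of non-zero complex numbers. If the power sums agree, i.e. Σ_{l=1}^s μ_l^N = Σ_{l=1}^t ν_l^N for all integers N with 1 ≤ N ≤ max(s,t), then s = t and there exists a permutation π of {1,...,s} such that μ_l = ν_{π(l)} for all l. -/
open Finset Polynomial

/-- From equality of the multisets of values of two tuples, extract an index bijection. -/
lemma exists_equiv_of_map_univ_eq {α : Type*} [DecidableEq α] :
    ∀ {s t : ℕ} (μ : Fin s → α) (ν : Fin t → α),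
      Multiset.map μ Finset.univ.val = Multiset.map ν Finset.univ.val →
      ∃ π : Fin s ≃ Fin t, ∀ l, μ l = ν (π l) := by
  intro s
  induction s with
  | zero =>
    intro t μ ν hmap
    have ht : t = 0 := by
      have := congrArg Multiset.card hmap
      simpa using this.symm
    subst ht
    exact ⟨Equiv.refl _, fun l => l.elim0⟩
  | succ n ih =>
    intro t μ ν hmap
    have h0 : μ 0 ∈ Multiset.map ν Finset.univ.val := by
      rw [← hmap]
      exact Multiset.mem_map_of_mem _ (Finset.mem_univ_val _)
    obtain ⟨j, -, hj⟩ := Multiset.mem_map.mp h0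
    cases t with
    | zero => exact j.elim0
    | succ m =>
      set e : Equiv.Perm (Fin (m + 1)) := Equiv.swap j 0 with he
      set ν' : Fin (m + 1) → α := ν ∘ e with hν'
      have hmap' : Multiset.map ν' Finset.univ.val = Multiset.map ν Finset.univ.val := by
        have huniv : Multiset.map (⇑e) Finset.univ.val = Finset.univ.val := by
          have := congrArg Finset.val (Finset.map_univ_equiv e)
          simp only [Finset.map_val] at this
          exact this
        calc Multiset.map ν' Finset.univ.val
            = Multiset.map ν (Multiset.map (⇑e) Finset.univ.val) := by
              rw [Multiset.map_map]
          _ = Multiset.map ν Finset.univ.val := by rw [huniv]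
      have hzero : ν' 0 = μ 0 := by
        simp [hν', he, hj]
      -- decompose univ for Fin (n+1) and Fin (m+1)
      have hA : Multiset.map μ (Finset.univ : Finset (Fin (n + 1))).val
          = μ 0 ::ₘ Multiset.map (μ ∘ Fin.succ) Finset.univ.val := by
        rw [Fin.univ_succ, Finset.cons_val, Multiset.map_cons, Finset.map_val,
          Multiset.map_map]
        rfl
      have hB : Multiset.map ν' (Finset.univ : Finset (Fin (m + 1))).val
          = ν' 0 ::ₘ Multiset.map (ν' ∘ Fin.succ) Finset.univ.val := by
        rw [Fin.univ_succ, Finset.cons_val, Multiset.map_cons, Finset.map_val,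
          Multiset.map_map]
        rfl
      have htail : Multiset.map (μ ∘ Fin.succ) Finset.univ.val
          = Multiset.map (ν' ∘ Fin.succ) Finset.univ.val := by
        have : μ 0 ::ₘ Multiset.map (μ ∘ Fin.succ) Finset.univ.val
            = μ 0 ::ₘ Multiset.map (ν' ∘ Fin.succ) Finset.univ.val := by
          rw [← hA, hmap, ← hmap', hB, hzero]
        exact (Multiset.cons_inj_right _).mp this
      obtain ⟨π', hπ'⟩ := ih (μ ∘ Fin.succ) (ν' ∘ Fin.succ) htail
      set π0 : Fin (n + 1) ≃ Fin (m + 1) :=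
        (finSuccEquiv n).trans ((Equiv.optionCongr π').trans (finSuccEquiv m).symm) with hπ0
      refine ⟨π0.trans e, fun l => ?_⟩
      cases l using Fin.cases with
      | zero =>
        have : π0 0 = 0 := by
          simp [hπ0, finSuccEquiv_zero]
        rw [Equiv.trans_apply, this, ← hzero]; rfl
      | succ i =>
        have : π0 i.succ = (π' i).succ := by
          simp [hπ0, finSuccEquiv_succ, finSuccEquiv_symm_some]
        rw [Equiv.trans_apply, this]
        exact hπ' i

theorem power_sums_determine_sequences (s t : ℕ) (μ : Fin s → ℂ) (ν : Fin t → ℂ)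
    (hμ : ∀ l, μ l ≠ 0) (hν : ∀ l, ν l ≠ 0)
    (h : ∀ N : ℕ, 1 ≤ N → N ≤ max s t →
      ∑ l, (μ l) ^ N = ∑ l, (ν l) ^ N) :
    s = t ∧ ∃ π : Fin s ≃ Fin t, ∀ l, μ l = ν (π l) := by
  classical
  set m := max s t with hm
  set A : Multiset ℂ := Finset.univ.val.map μ with hA
  set B : Multiset ℂ := Finset.univ.val.map ν with hB
  have cardA : Multiset.card A = s := by simp [hA]
  have cardB : Multiset.card B = t := by simp [hB]
  -- Newton's identity, evaluated
  have NA : ∀ k : ℕ, (k : ℂ) * A.esymm k = (-1) ^ (k + 1) *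
      ∑ a ∈ (Finset.HasAntidiagonal.antidiagonal k).filter (fun a => a.1 < k),
        (-1) ^ a.1 * A.esymm a.1 * (∑ l, μ l ^ a.2) := by
    intro k
    have := congrArg (MvPolynomial.aeval μ) (MvPolynomial.mul_esymm_eq_sum (Fin s) ℂ k)
    simp only [map_mul, map_sum, MvPolynomial.aeval_esymm_eq_multiset_esymm] at this
    simpa [map_sum, MvPolynomial.aeval_esymm_eq_multiset_esymm, MvPolynomial.psum, hA] using this
  have NB : ∀ k : ℕ, (k : ℂ) * B.esymm k = (-1) ^ (k + 1) *
      ∑ a ∈ (Finset.HasAntidiagonal.antidiagonal k).filter (fun a => a.1 < k),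
        (-1) ^ a.1 * B.esymm a.1 * (∑ l, ν l ^ a.2) := by
    intro k
    have := congrArg (MvPolynomial.aeval ν) (MvPolynomial.mul_esymm_eq_sum (Fin t) ℂ k)
    simp only [map_mul, map_sum, MvPolynomial.aeval_esymm_eq_multiset_esymm] at this
    simpa [map_sum, MvPolynomial.aeval_esymm_eq_multiset_esymm, MvPolynomial.psum, hB] using this
  have key : ∀ k : ℕ, k ≤ m → A.esymm k = B.esymm k := by
    intro k
    induction k using Nat.strong_induction_on with
    | _ k ih =>
      intro hk
      rcases Nat.eq_zero_or_pos k with rfl | hk0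
      · simp [Multiset.esymm]
      · have hcongr : (k : ℂ) * A.esymm k = (k : ℂ) * B.esymm k := by
          rw [NA k, NB k]
          congr 1
          refine Finset.sum_congr rfl fun a ha => ?_
          simp only [Finset.mem_filter, Finset.HasAntidiagonal.mem_antidiagonal] at ha
          have h1 : A.esymm a.1 = B.esymm a.1 :=
            ih a.1 ha.2 (le_trans (le_of_lt ha.2) hk)
          have h2 : ∑ l, μ l ^ a.2 = ∑ l, ν l ^ a.2 := by
            apply h a.2
            · omega
            · omega
          rw [h1, h2]
        exact mul_left_cancel₀ (Nat.cast_ne_zero.mpr hk0.ne') hcongr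
  -- esymm at index above card vanishes; at the card it is the full product
  have esymm_zero_of_lt : ∀ (C : Multiset ℂ) (k : ℕ), Multiset.card C < k → C.esymm k = 0 := by
    intro C k hk
    simp [Multiset.esymm, Multiset.powersetCard_eq_empty _ hk]
  have esymmA_top : A.esymm s = ∏ l, μ l := by
    rw [hA, Finset.esymm_map_val]
    have : Finset.powersetCard s (Finset.univ : Finset (Fin s)) = {Finset.univ} := by
      simpa using Finset.powersetCard_self (Finset.univ : Finset (Fin s))
    rw [this, Finset.sum_singleton]
  have esymmB_top : B.esymm t = ∏ l, ν l := by
    rw [hB, Finset.esymm_map_val]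
    have : Finset.powersetCard t (Finset.univ : Finset (Fin t)) = {Finset.univ} := by
      simpa using Finset.powersetCard_self (Finset.univ : Finset (Fin t))
    rw [this, Finset.sum_singleton]
  have hst : s = t := by
    by_contra hne
    rcases Nat.lt_or_ge s t with hlt | hge
    · have h1 := key t (le_max_right s t)
      rw [esymm_zero_of_lt A t (by omega), esymmB_top] at h1
      exact Finset.prod_ne_zero_iff.mpr (fun l _ => hν l) h1.symm
    · have hlt : t < s := lt_of_le_of_ne hge (Ne.symm hne)
      have h1 := key s (le_max_left s t)
      rw [esymm_zero_of_lt B s (by omega), esymmA_top] at h1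
      exact Finset.prod_ne_zero_iff.mpr (fun l _ => hμ l) h1
  subst hst
  refine ⟨rfl, ?_⟩
  have hPoly : (A.map fun a => X - C a).prod = (B.map fun a => X - C a).prod := by
    rw [Multiset.prod_X_sub_X_eq_sum_esymm, Multiset.prod_X_sub_X_eq_sum_esymm, cardA, cardB]
    refine Finset.sum_congr rfl fun j hj => ?_
    rw [key j (by simp only [Finset.mem_range] at hj; omega)]
  have hABeq : A = B := by
    have := congrArg Polynomial.roots hPoly
    rwa [Polynomial.roots_multiset_prod_X_sub_C, Polynomial.roots_multiset_prod_X_sub_C] at this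
  exact exists_equiv_of_map_univ_eq μ ν hABeq
end

section
/- Let {μ_l}_{l=1}^s and {ν_l}_{l=1}^t be two finite sequences of non-zero complex numbers. If there exists N₀ ∈ ℕ such that Σ_{l=1}^s μ_l^N = Σ_{l=1}^t ν_l^N for all N ≥ N₀, then s = t and there exists a permutation π of {1,...,s} such that μ_l = ν_{π(l)} for all l. -/
open Finset

private lemma perm_get_equiv {α : Type*} {l₁ l₂ : List α} (p : l₁.Perm l₂) :
    ∃ e : Fin l₁.length ≃ Fin l₂.length, ∀ i, l₁.get i = l₂.get (e i) := by
  induction p with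
  | nil => exact ⟨Equiv.refl _, fun i => i.elim0⟩
  | cons x p ih =>
      obtain ⟨e, he⟩ := ih
      refine ⟨(finSuccEquiv _).trans ((Equiv.optionCongr e).trans (finSuccEquiv _).symm), ?_⟩
      intro i
      refine Fin.cases ?_ (fun j => ?_) i
      · simp
      · simpa using he j
  | swap x y l =>
      refine ⟨(Equiv.swap 0 1 : Equiv.Perm (Fin (l.length + 1 + 1))), ?_⟩
      intro i
      refine Fin.cases ?_ (fun j => ?_) i
      · show List.get (y :: x :: l) (0 : Fin (l.length + 1 + 1)) =
          (x :: y :: l).get ((Equiv.swap (0 : Fin (l.length + 1 + 1)) 1) 0)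
        rw [Equiv.swap_apply_left]
        simp [Fin.ext_iff]
      · refine Fin.cases ?_ (fun k => ?_) j
        · show (y :: x :: l).get ((0 : Fin (l.length + 1)).succ) =
            (x :: y :: l).get
              ((Equiv.swap (0 : Fin (l.length + 1 + 1)) 1) ((0 : Fin (l.length + 1)).succ))
          rw [Fin.succ_zero_eq_one, Equiv.swap_apply_right]
          simp [Fin.ext_iff]
        · show (y :: x :: l).get (k.succ.succ) =
            (x :: y :: l).get
              ((Equiv.swap (0 : Fin (l.length + 1 + 1)) 1) (k.succ.succ))
          rw [Equiv.swap_apply_of_ne_of_ne (Fin.succ_ne_zero _) (Fin.succ_succ_ne_one _)]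
          simp
  | trans p q ih1 ih2 =>
      obtain ⟨e1, h1⟩ := ih1
      obtain ⟨e2, h2⟩ := ih2
      exact ⟨e1.trans e2, fun i => (h1 i).trans (h2 _)⟩

private lemma multiset_eq_of_power_sums {S T : Multiset ℂ}
    (hS : ∀ z ∈ S, z ≠ 0) (hT : ∀ z ∈ T, z ≠ 0) (N₀ : ℕ)
    (h : ∀ N : ℕ, N₀ ≤ N → (S.map (· ^ N)).sum = (T.map (· ^ N)).sum) :
    S = T := by
  classical
  set A : Finset ℂ := S.toFinset ∪ T.toFinset with hA
  have hsum : ∀ (U : Multiset ℂ), U.toFinset ⊆ A → ∀ N : ℕ,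
      (U.map (· ^ N)).sum = ∑ a ∈ A, (U.count a : ℂ) * a ^ N := by
    intro U hU N
    rw [Finset.sum_multiset_map_count]
    rw [Finset.sum_subset hU]
    · simp [nsmul_eq_mul]
    · intro x _ hx
      simp [Multiset.count_eq_zero_of_notMem (by simpa using hx)]
  have key : ∀ a ∈ A, ((S.count a : ℂ) - T.count a) * a ^ N₀ = 0 := by
    have li : LinearIndependent ℂ (fun a : ℂ => ⇑(powersHom ℂ a)) :=
      (linearIndependent_monoidHom (Multiplicative ℕ) ℂ).comp _ (powersHom ℂ).injective
    have := linearIndependent_iff'.mp li A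
      (fun a => ((S.count a : ℂ) - T.count a) * a ^ N₀) ?_
    · exact this
    · funext n
      have hn : (0 : Multiplicative ℕ → ℂ) n = 0 := rfl
      rw [Finset.sum_apply]
      simp only [Pi.smul_apply, powersHom_apply, smul_eq_mul]
      have : ∑ a ∈ A, ((S.count a : ℂ) - T.count a) * a ^ N₀ * a ^ n.toAdd
          = ∑ a ∈ A, ((S.count a : ℂ) * a ^ (N₀ + n.toAdd)
              - (T.count a : ℂ) * a ^ (N₀ + n.toAdd)) := by
        refine Finset.sum_congr rfl fun a _ => ?_
        rw [pow_add]
        ring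
      rw [this, Finset.sum_sub_distrib, ← hsum S (Finset.subset_union_left) _,
        ← hsum T (Finset.subset_union_right) _, h _ (Nat.le_add_right _ _), sub_self]
      rfl
  have hcount : ∀ a : ℂ, S.count a = T.count a := by
    intro a
    by_cases ha : a ∈ A
    · have hane : a ≠ 0 := by
        rcases Finset.mem_union.mp ha with h' | h'
        · exact hS a (Multiset.mem_toFinset.mp h')
        · exact hT a (Multiset.mem_toFinset.mp h')
      have := key a ha
      have h2 : (S.count a : ℂ) = T.count a := by
        have hp : (a : ℂ) ^ N₀ ≠ 0 := pow_ne_zero _ hane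
        exact sub_eq_zero.mp ((mul_eq_zero.mp this).resolve_right hp)
      exact_mod_cast h2
    · have h1 : a ∉ S.toFinset := fun hx => ha (Finset.mem_union.mpr (Or.inl hx))
      have h2 : a ∉ T.toFinset := fun hx => ha (Finset.mem_union.mpr (Or.inr hx))
      rw [Multiset.count_eq_zero_of_notMem (by simpa using h1),
        Multiset.count_eq_zero_of_notMem (by simpa using h2)]
  exact Multiset.ext.mpr hcount

theorem power_sums_eventually_determine_sequences (s t : ℕ) (μ : Fin s → ℂ) (ν : Fin t → ℂ)
    (hμ : ∀ l, μ l ≠ 0) (hν : ∀ l, ν l ≠ 0)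
    (N₀ : ℕ)
    (h : ∀ N : ℕ, N₀ ≤ N → ∑ l, (μ l) ^ N = ∑ l, (ν l) ^ N) :
    s = t ∧ ∃ π : Fin s ≃ Fin t, ∀ l, μ l = ν (π l) := by
  classical
  have hmult : ((List.ofFn μ : List ℂ) : Multiset ℂ) = ((List.ofFn ν : List ℂ) : Multiset ℂ) := by
    apply multiset_eq_of_power_sums
    · intro z hz
      obtain ⟨i, hi⟩ := List.mem_ofFn.mp (by simpa using hz)
      exact hi ▸ hμ i
    · intro z hz
      obtain ⟨i, hi⟩ := List.mem_ofFn.mp (by simpa using hz)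
      exact hi ▸ hν i
    · intro N hN
      have := h N hN
      simpa [List.map_ofFn, Function.comp_def, List.sum_ofFn] using this
  have hperm : (List.ofFn μ).Perm (List.ofFn ν) := Multiset.coe_eq_coe.mp hmult
  have hst : s = t := by
    have := hperm.length_eq
    simpa using this
  obtain ⟨e, he⟩ := perm_get_equiv hperm
  refine ⟨hst, ?_⟩
  refine ⟨(finCongr (List.length_ofFn (f := μ)).symm).trans (e.trans (finCongr (List.length_ofFn (f := ν)))), ?_⟩
  intro l
  have := he (finCongr (List.length_ofFn (f := μ)).symm l)
  simpa [List.get_ofFn, Fin.cast] using this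
end

section
/- Let m ≥ 1 and let P_0,...,P_{m−1} be projections in M_D(ℂ) (with indices taken mod m, P_m = P_0) satisfying P_u P_{u'} = δ_{u,u'} P_u and Σ_u P_u = 1. Let A^1,...,A^d ∈ M_D(ℂ) satisfy A^i = Σ_{u=0}^{m−1} P_u A^i P_{u+1} for all i. Then for any N ∈ ℕ and any indices i_1,...,i_N, if m does not divide N then tr(A^{i_1} ⋯ A^{i_N}) = 0. -/
open Matrix
open Fin.NatCast Fin.CommRing

private lemma prod_sandwich {m D : ℕ} [NeZero m]
    (P : Fin m → Matrix (Fin D) (Fin D) ℂ)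
    (hP : ∀ u u', P u * P u' = if u = u' then P u else 0)
    (l : List (Matrix (Fin D) (Fin D) ℂ))
    (hl : ∀ B ∈ l, ∀ v : Fin m, P v * B = P v * B * P (v + 1)) :
    ∀ v : Fin m, P v * l.prod = P v * l.prod * P (v + (l.length : Fin m)) := by
  induction l with
  | nil =>
    intro v
    simp [hP v v]
  | cons B t ih =>
    intro v
    have hB := hl B List.mem_cons_self v
    have ht := ih (fun C hC => hl C (List.mem_cons_of_mem _ hC)) (v + 1)
    have hidx : v + 1 + (t.length : Fin m) = v + (((t.length : ℕ) + 1 : ℕ) : Fin m) := by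
      push_cast
      ring
    calc P v * (B :: t).prod = (P v * B) * t.prod := by
          rw [List.prod_cons, ← mul_assoc]
      _ = (P v * B * P (v + 1)) * t.prod := by rw [← hB]
      _ = (P v * B) * (P (v + 1) * t.prod) := by rw [mul_assoc, mul_assoc]
      _ = (P v * B) * (P (v + 1) * t.prod * P (v + 1 + (t.length : Fin m))) := by
          rw [← ht]
      _ = (P v * B * P (v + 1)) * t.prod * P (v + 1 + (t.length : Fin m)) := by
          simp only [mul_assoc]
      _ = P v * (B :: t).prod * P (v + ((B :: t).length : Fin m)) := by
          rw [← hB, List.prod_cons, List.length_cons, hidx]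
          simp only [mul_assoc]

theorem periodic_tensor_trace_vanishes (m D d : ℕ) [NeZero m]
    (P : Fin m → Matrix (Fin D) (Fin D) ℂ)
    (hP : ∀ u u', P u * P u' = if u = u' then P u else 0)
    (hPsum : ∑ u, P u = 1)
    (A : Fin d → Matrix (Fin D) (Fin D) ℂ)
    (hA : ∀ i, A i = ∑ u, P u * A i * P (u + 1))
    (N : ℕ) (hN : ¬ m ∣ N) (idx : Fin N → Fin d) :
    Matrix.trace ((List.ofFn (fun k => A (idx k))).prod) = 0 := by
  set l := List.ofFn (fun k => A (idx k)) with hldef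
  have hA' : ∀ i, ∀ v : Fin m, P v * A i = P v * A i * P (v + 1) := by
    intro i v
    conv_lhs => rw [hA i]
    conv_rhs => rw [hA i]
    rw [Finset.mul_sum, Finset.sum_mul]
    simp only [← mul_assoc, hP]
    rw [Finset.sum_eq_single v, Finset.sum_eq_single v]
    · simp [hP, mul_assoc]
    · intro u _ hu; simp [Ne.symm hu]
    · simp
    · intro u _ hu; simp [Ne.symm hu]
    · simp
  have hl : ∀ B ∈ l, ∀ v : Fin m, P v * B = P v * B * P (v + 1) := by
    intro B hB v
    rw [hldef, List.mem_ofFn] at hB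
    obtain ⟨k, hk⟩ := hB
    rw [← hk]
    exact hA' (idx k) v
  have key := prod_sandwich P hP l hl
  have hlen : l.length = N := by simp [hldef]
  have hcast : (N : Fin m) ≠ 0 := by
    intro h
    exact hN ((CharP.cast_eq_zero_iff (Fin m) m N).mp h)
  have h1 : l.prod = 1 * l.prod := (one_mul _).symm
  rw [h1, ← hPsum, Finset.sum_mul, trace_sum]
  apply Finset.sum_eq_zero
  intro v _
  rw [key v, hlen, trace_mul_cycle]
  have hz : P (v + (N : Fin m)) * P v = 0 := by
    rw [hP]
    simp only [ite_eq_right_iff]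
    intro h
    exfalso
    apply hcast
    have : v + (N : Fin m) = v + 0 := by rw [add_zero]; exact h
    exact add_left_cancel this
  rw [hz, zero_mul, trace_zero]
end

section
/- Let E: M_D(ℂ) → M_D(ℂ) be a completely positive trace-preserving map with Kraus operators {B^i}_{i=1}^d, and suppose E = F^p where F is a completely positive trace-preserving map with Kraus operators {A^i}_{i=1}^d. Then there exists an isometry W: ℂ^d → (ℂ^d)^{⊗p} such that A^{i_1} A^{i_2} ⋯ A^{i_p} = Σ_{i=1}^d W^{(i_1,...,i_p),i} B^i for all index tuples, and consequently |V_{pN}(A)⟩ = W^{⊗N} |V_N(B)⟩ for all N. -/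
open Matrix

lemma iter_kraus {D d : ℕ} (A : Fin d → Matrix (Fin D) (Fin D) ℂ)
    (F : Matrix (Fin D) (Fin D) ℂ → Matrix (Fin D) (Fin D) ℂ)
    (hF : ∀ X, F X = ∑ i, A i * X * (A i)ᴴ) (p : ℕ) (X : Matrix (Fin D) (Fin D) ℂ) :
    F^[p] X = ∑ iv : Fin p → Fin d,
      (List.ofFn (fun k => A (iv k))).prod * X * ((List.ofFn (fun k => A (iv k))).prod)ᴴ := by
  induction p generalizing X with
  | zero => simp
  | succ n ih =>
    rw [Function.iterate_succ_apply', ih, hF]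
    rw [← Equiv.sum_comp (Fin.consEquiv (fun _ : Fin (n+1) => Fin d))
      (fun iv => (List.ofFn (fun k => A (iv k))).prod * X * ((List.ofFn (fun k => A (iv k))).prod)ᴴ)]
    rw [Fintype.sum_prod_type]
    simp only [Fin.consEquiv_apply, List.ofFn_succ, Fin.cons_zero, Fin.cons_succ, List.prod_cons]
    refine Finset.sum_congr rfl fun j _ => ?_
    simp only [Finset.mul_sum, Finset.sum_mul]
    refine Finset.sum_congr rfl fun iv _ => ?_
    simp only [Matrix.conjTranspose_mul]
    noncomm_ring

lemma prod_expand {D d : ℕ} (B : Fin d → Matrix (Fin D) (Fin D) ℂ)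
    (N : ℕ) (w : Fin N → Fin d → ℂ) :
    (List.ofFn (fun k => ∑ i, w k i • B i)).prod
      = ∑ j : Fin N → Fin d, (∏ k, w k (j k)) • (List.ofFn (fun k => B (j k))).prod := by
  induction N with
  | zero => simp
  | succ n ih =>
    rw [← Equiv.sum_comp (Fin.consEquiv (fun _ : Fin (n+1) => Fin d))
      (fun j => (∏ k, w k (j k)) • (List.ofFn (fun k => B (j k))).prod)]
    rw [Fintype.sum_prod_type]
    simp only [Fin.consEquiv_apply, List.ofFn_succ, Fin.cons_zero, Fin.cons_succ, List.prod_cons,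
      Fin.prod_univ_succ]
    rw [ih (fun k => w k.succ)]
    simp only [Finset.sum_mul, Finset.mul_sum, Finset.smul_sum, smul_mul_assoc, mul_smul_comm,
      smul_smul]
    rw [Finset.sum_comm]
    simp only [mul_comm]

lemma mul_std_mul {D : ℕ} (P Q : Matrix (Fin D) (Fin D) ℂ) (k l a b : Fin D) :
    (P * (Matrix.single k l (1:ℂ)) * Q) a b = P a k * Q l b := by
  simp [Matrix.mul_apply, Matrix.single, ite_and, Finset.mul_sum, Finset.sum_mul]

theorem divisible_implies_refinable (D d p : ℕ) (hp : 1 ≤ p)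
    (A B : Fin d → Matrix (Fin D) (Fin D) ℂ)
    (E F : Matrix (Fin D) (Fin D) ℂ → Matrix (Fin D) (Fin D) ℂ)
    (hE : ∀ X, E X = ∑ i, B i * X * (B i)ᴴ)
    (hF : ∀ X, F X = ∑ i, A i * X * (A i)ᴴ)
    (hTPE : ∀ X, Matrix.trace (E X) = Matrix.trace X)
    (hTPF : ∀ X, Matrix.trace (F X) = Matrix.trace X)
    (hdiv : ∀ X, F^[p] X = E X) :
    ∃ W : (Fin p → Fin d) → Fin d → ℂ,
      (∀ i i' : Fin d, ∑ jv : Fin p → Fin d, (starRingEnd ℂ) (W jv i) * W jv i'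
          = if i = i' then 1 else 0) ∧
      (∀ iv : Fin p → Fin d,
        (List.ofFn (fun k => A (iv k))).prod = ∑ i, W iv i • B i) ∧
      (∀ (N : ℕ) (iv : Fin N → Fin p → Fin d),
        Matrix.trace ((List.ofFn (fun k => (List.ofFn (fun l => A (iv k l))).prod)).prod)
          = ∑ j : Fin N → Fin d, (∏ k, W (iv k) (j k)) *
              Matrix.trace ((List.ofFn (fun k => B (j k))).prod)) := by
  classical
  set C : (Fin p → Fin d) → Matrix (Fin D) (Fin D) ℂ :=
    fun iv => (List.ofFn (fun k => A (iv k))).prod with hC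
  -- channel equality
  have h1 : ∀ X, ∑ iv : Fin p → Fin d, C iv * X * (C iv)ᴴ = ∑ i, B i * X * (B i)ᴴ := by
    intro X
    rw [← iter_kraus A F hF p X, hdiv, hE]
  -- Gram equality
  have hGram : ∀ (a b k l : Fin D),
      ∑ iv : Fin p → Fin d, C iv a k * (starRingEnd ℂ) (C iv b l)
        = ∑ i, B i a k * (starRingEnd ℂ) (B i b l) := by
    intro a b k l
    have := congrFun (congrFun (h1 (Matrix.single k l (1:ℂ))) a) b
    simpa [Matrix.sum_apply, mul_std_mul, Matrix.conjTranspose_apply] using this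
  set k₀ : Fin p := ⟨0, hp⟩ with hk₀
  set ι : Fin d → (Fin p → Fin d) := fun i _ => i with hιdef
  have hι : Function.Injective ι := fun i i' h => congrFun h k₀
  set Xt : Matrix (Fin D × Fin D) (Fin p → Fin d) ℂ :=
    fun a jv => if jv = ι (jv k₀) then B (jv k₀) a.1 a.2 else 0 with hXt
  set Y : Matrix (Fin D × Fin D) (Fin p → Fin d) ℂ := fun a jv => C jv a.1 a.2 with hY
  -- sums over constant tuples
  have hsum : ∀ (f : (Fin p → Fin d) → ℂ),
      (∑ jv : Fin p → Fin d, if jv = ι (jv k₀) then f jv else 0) = ∑ i, f (ι i) := by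
    intro f
    have e1 : (∑ jv : Fin p → Fin d, if jv = ι (jv k₀) then f jv else 0)
        = ∑ jv ∈ (Finset.univ : Finset (Fin d)).image ι,
            (if jv = ι (jv k₀) then f jv else 0) := by
      refine (Finset.sum_subset (Finset.subset_univ _) ?_).symm
      intro jv _ hjv
      simp only [Finset.mem_image] at hjv
      rw [if_neg]
      intro h
      exact hjv ⟨jv k₀, Finset.mem_univ _, h.symm⟩
    rw [e1, Finset.sum_image (fun x _ y _ h => hι h)]
    refine Finset.sum_congr rfl fun i _ => ?_
    simp [hιdef]
  have hXgram : Xt * Xtᴴ = Y * Yᴴ := by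
    ext a b
    simp only [Matrix.mul_apply, Matrix.conjTranspose_apply, Complex.star_def]
    have e2 : ∀ jv : Fin p → Fin d, Xt a jv * (starRingEnd ℂ) (Xt b jv)
        = if jv = ι (jv k₀) then B (jv k₀) a.1 a.2 * (starRingEnd ℂ) (B (jv k₀) b.1 b.2)
          else 0 := by
      intro jv
      by_cases h : jv = ι (jv k₀)
      · simp only [hXt, if_pos h]
      · simp only [hXt, if_neg h, zero_mul, map_zero, mul_zero]
    calc (∑ jv : Fin p → Fin d, Xt a jv * (starRingEnd ℂ) (Xt b jv))
        = ∑ jv : Fin p → Fin d, (if jv = ι (jv k₀)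
            then B (jv k₀) a.1 a.2 * (starRingEnd ℂ) (B (jv k₀) b.1 b.2) else 0) :=
          Finset.sum_congr rfl fun jv _ => e2 jv
      _ = ∑ i : Fin d, B ((ι i) k₀) a.1 a.2 * (starRingEnd ℂ) (B ((ι i) k₀) b.1 b.2) :=
          hsum _
      _ = ∑ i : Fin d, B i a.1 a.2 * (starRingEnd ℂ) (B i b.1 b.2) := rfl
      _ = ∑ jv : Fin p → Fin d, C jv a.1 a.2 * (starRingEnd ℂ) (C jv b.1 b.2) :=
          (hGram a.1 b.1 a.2 b.2).symm
      _ = ∑ jv : Fin p → Fin d, Y a jv * (starRingEnd ℂ) (Y b jv) := rfl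
  -- linear maps
  set T := Matrix.toEuclideanLin Xtᴴ with hT
  set S := Matrix.toEuclideanLin Yᴴ with hS
  have hinner : ∀ u v, inner ℂ (T u) (T v) = inner ℂ (S u) (S v) := by
    intro u v
    rw [hT, hS, Matrix.toEuclideanLin_conjTranspose_eq_adjoint Xt,
      Matrix.toEuclideanLin_conjTranspose_eq_adjoint Y,
      LinearMap.adjoint_inner_left, LinearMap.adjoint_inner_left]
    congr 1
    rw [← Matrix.toEuclideanLin_conjTranspose_eq_adjoint,
      ← Matrix.toEuclideanLin_conjTranspose_eq_adjoint]
    have e3 : ∀ (M : Matrix (Fin D × Fin D) (Fin p → Fin d) ℂ)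
        (w : EuclideanSpace ℂ (Fin D × Fin D)),
        Matrix.toEuclideanLin M (Matrix.toEuclideanLin Mᴴ w)
          = (WithLp.equiv 2 ((Fin D × Fin D) → ℂ)).symm
              ((M * Mᴴ) *ᵥ (WithLp.equiv 2 ((Fin D × Fin D) → ℂ)) w) := by
      intro M w
      rw [Matrix.toEuclideanLin_apply, Matrix.toEuclideanLin_apply]
      simp [Matrix.mulVec_mulVec]
    rw [e3, e3, hXgram]
  have hnorm : ∀ u, ‖T u‖ = ‖S u‖ := by
    intro u
    have h2 := hinner u u
    rw [inner_self_eq_norm_sq_to_K, inner_self_eq_norm_sq_to_K] at h2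
    have h3 : (‖T u‖ : ℝ)^2 = (‖S u‖ : ℝ)^2 := by exact_mod_cast h2
    exact (sq_eq_sq₀ (norm_nonneg _) (norm_nonneg _)).mp h3
  have hker : LinearMap.ker T ≤ LinearMap.ker S := by
    intro u hu
    rw [LinearMap.mem_ker] at hu ⊢
    have : ‖S u‖ = 0 := by rw [← hnorm, hu, norm_zero]
    exact norm_eq_zero.mp this
  set ℓ : LinearMap.range T →ₗ[ℂ] EuclideanSpace ℂ (Fin p → Fin d) :=
    ((LinearMap.ker T).liftQ S hker) ∘ₗ (T.quotKerEquivRange).symm.toLinearMap with hℓdef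
  have hℓ : ∀ u, ℓ ⟨T u, LinearMap.mem_range_self T u⟩ = S u := by
    intro u
    have h2 : (T.quotKerEquivRange).symm ⟨T u, LinearMap.mem_range_self T u⟩
        = (LinearMap.ker T).mkQ u :=
      T.quotKerEquivRange_symm_apply_image u (LinearMap.mem_range_self T u)
    simp [hℓdef, h2]
  have hℓnorm : ∀ x : LinearMap.range T, ‖ℓ x‖ = ‖x‖ := by
    rintro ⟨x, hx⟩
    obtain ⟨u, rfl⟩ := hx
    rw [hℓ u]
    have : ‖(⟨T u, LinearMap.mem_range_self T u⟩ : LinearMap.range T)‖ = ‖T u‖ := rfl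
    rw [this, hnorm]
  set L : LinearMap.range T →ₗᵢ[ℂ] EuclideanSpace ℂ (Fin p → Fin d) := ⟨ℓ, hℓnorm⟩ with hL
  set U := L.extend with hUdef
  have hU : ∀ u, U (T u) = S u := by
    intro u
    have := LinearIsometry.extend_apply L ⟨T u, LinearMap.mem_range_self T u⟩
    rw [hUdef]
    calc L.extend (T u) = L ⟨T u, LinearMap.mem_range_self T u⟩ := this
      _ = S u := hℓ u
  -- basis vectors of the big space
  set fb : Fin d → EuclideanSpace ℂ (Fin p → Fin d) :=
    fun i => WithLp.toLp 2 (fun jv => if jv = ι i then (1:ℂ) else 0) with hfb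
  set W : (Fin p → Fin d) → Fin d → ℂ :=
    fun jv i => (starRingEnd ℂ) ((U (fb i)) jv) with hWdef
  -- decomposition of T u
  have hdecomp : ∀ u : EuclideanSpace ℂ (Fin D × Fin D),
      T u = ∑ i, (∑ a, (starRingEnd ℂ) (Xt a (ι i)) * u a) • fb i := by
    intro u
    ext jv
    have hL2 : T u jv = ∑ a, (starRingEnd ℂ) (Xt a jv) * u a := rfl
    rw [hL2, WithLp.ofLp_sum, Finset.sum_apply jv Finset.univ]
    have hR2 : ∀ i : Fin d, ((∑ a, (starRingEnd ℂ) (Xt a (ι i)) * u a) • fb i) jv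
        = (∑ a, (starRingEnd ℂ) (Xt a (ι i)) * u a) * (if jv = ι i then 1 else 0) :=
      fun i => rfl
    rw [Finset.sum_congr rfl fun i _ => hR2 i]
    by_cases h : jv = ι (jv k₀)
    · have hcond : ∀ i : Fin d, (if jv = ι i then (1:ℂ) else 0) = if i = jv k₀ then 1 else 0 := by
        intro i
        have he : (jv = ι i) = (i = jv k₀) := by
          apply propext; constructor
          · intro hc; rw [hc]
          · intro hc; rw [h, hc]
        simp only [he]
      simp only [hcond, mul_ite, mul_one, mul_zero]
      rw [Finset.sum_ite_eq' Finset.univ (jv k₀)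
        (fun i => ∑ a, (starRingEnd ℂ) (Xt a (ι i)) * u a), if_pos (Finset.mem_univ _), ← h]
    · have hz : ∀ a : Fin D × Fin D, Xt a jv = 0 := by
        intro a; exact if_neg h
      have hz2 : ∀ i : Fin d, jv ≠ ι i := by
        intro i hc
        exact h (by rw [hc])
      simp only [hz, map_zero, zero_mul, Finset.sum_const_zero, hz2, if_neg, if_false, mul_zero]
  -- the key linear-combination identity
  have hkey : ∀ (b c : Fin D) (jv : Fin p → Fin d),
      C jv b c = ∑ i, W jv i * B i b c := by
    intro b c jv
    set u : EuclideanSpace ℂ (Fin D × Fin D) :=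
      WithLp.toLp 2 (fun a => if a = (b, c) then (1:ℂ) else 0) with hu
    have h5 : S u = ∑ i, (∑ a, (starRingEnd ℂ) (Xt a (ι i)) * u a) • U (fb i) := by
      rw [← hU u, hdecomp u, map_sum]
      refine Finset.sum_congr rfl fun i _ => ?_
      exact U.map_smul _ _
    have h6 : S u jv = ∑ i, (∑ a, (starRingEnd ℂ) (Xt a (ι i)) * u a) * (U (fb i)) jv := by
      rw [h5, WithLp.ofLp_sum, Finset.sum_apply jv Finset.univ]
      rfl
    have h7 : ∀ i : Fin d, (∑ a, (starRingEnd ℂ) (Xt a (ι i)) * u a)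
        = (starRingEnd ℂ) (B i b c) := by
      intro i
      have : ∀ a : Fin D × Fin D, (starRingEnd ℂ) (Xt a (ι i)) * u a
          = if a = (b, c) then (starRingEnd ℂ) (Xt a (ι i)) else 0 := by
        intro a
        have hua : u a = if a = (b, c) then 1 else 0 := rfl
        by_cases ha : a = (b, c)
        · rw [hua, if_pos ha, if_pos ha, mul_one]
        · rw [hua, if_neg ha, if_neg ha, mul_zero]
      rw [Finset.sum_congr rfl fun a _ => this a,
        Finset.sum_ite_eq' Finset.univ ((b, c) : Fin D × Fin D)
          (fun a => (starRingEnd ℂ) (Xt a (ι i))), if_pos (Finset.mem_univ _)]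
      congr 1
      show (if ι i = ι ((ι i) k₀) then B ((ι i) k₀) b c else 0) = B i b c
      rw [if_pos rfl]
    have h8 : S u jv = (starRingEnd ℂ) (C jv b c) := by
      have : S u jv = ∑ a, (starRingEnd ℂ) (Y a jv) * u a := rfl
      rw [this]
      have h9 : ∀ a : Fin D × Fin D, (starRingEnd ℂ) (Y a jv) * u a
          = if a = (b, c) then (starRingEnd ℂ) (Y a jv) else 0 := by
        intro a
        have hua : u a = if a = (b, c) then 1 else 0 := rfl
        by_cases ha : a = (b, c)
        · rw [hua, if_pos ha, if_pos ha, mul_one]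
        · rw [hua, if_neg ha, if_neg ha, mul_zero]
      rw [Finset.sum_congr rfl fun a _ => h9 a,
        Finset.sum_ite_eq' Finset.univ ((b, c) : Fin D × Fin D)
          (fun a => (starRingEnd ℂ) (Y a jv)), if_pos (Finset.mem_univ _)]
    have h10 : (starRingEnd ℂ) (C jv b c)
        = ∑ i, (starRingEnd ℂ) (B i b c) * (U (fb i)) jv := by
      rw [← h8, h6, Finset.sum_congr rfl fun i _ => by rw [h7 i]]
    have := congrArg (starRingEnd ℂ) h10
    rw [Complex.conj_conj, map_sum] at this
    rw [this]
    refine Finset.sum_congr rfl fun i _ => ?_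
    rw [_root_.map_mul, Complex.conj_conj, hWdef]
    ring
  refine ⟨W, ?_, ?_, ?_⟩
  · -- orthonormality
    intro i i'
    have h4 : ∑ jv : Fin p → Fin d, (starRingEnd ℂ) (W jv i) * W jv i'
        = (starRingEnd ℂ) (∑ jv : Fin p → Fin d,
            (starRingEnd ℂ) ((U (fb i)) jv) * (U (fb i')) jv) := by
      rw [map_sum]
      refine Finset.sum_congr rfl fun jv _ => ?_
      simp only [hWdef, _root_.map_mul, Complex.conj_conj]
    rw [h4]
    have h5 : (∑ jv : Fin p → Fin d, (starRingEnd ℂ) ((U (fb i)) jv) * (U (fb i')) jv)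
        = inner ℂ (U (fb i)) (U (fb i')) := by
      rw [PiLp.inner_apply]
      exact Finset.sum_congr rfl fun jv _ => (RCLike.inner_apply' _ _).symm
    rw [h5, U.inner_map_map]
    have h6 : inner ℂ (fb i) (fb i') = if i = i' then 1 else 0 := by
      have h6' : inner ℂ (fb i) (fb i')
          = ∑ jv : Fin p → Fin d, (starRingEnd ℂ) ((fb i) jv) * (fb i') jv := by
        rw [PiLp.inner_apply]
        exact Finset.sum_congr rfl fun jv _ => RCLike.inner_apply' _ _
      rw [h6']
      have h7 : ∀ jv : Fin p → Fin d, (starRingEnd ℂ) ((fb i) jv) * (fb i') jv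
          = if jv = ι i then (if jv = ι i' then 1 else 0) else 0 := by
        intro jv
        have e1 : (fb i) jv = if jv = ι i then (1:ℂ) else 0 := rfl
        have e2 : (fb i') jv = if jv = ι i' then (1:ℂ) else 0 := rfl
        rw [e1, e2]
        by_cases h1 : jv = ι i
        · rw [if_pos h1, if_pos h1, _root_.map_one, one_mul]
        · rw [if_neg h1, if_neg h1, _root_.map_zero, zero_mul]
      rw [Finset.sum_congr rfl fun jv _ => h7 jv,
        Finset.sum_ite_eq' Finset.univ (ι i) (fun jv => if jv = ι i' then (1:ℂ) else 0),
        if_pos (Finset.mem_univ _)]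
      by_cases h8 : i = i'
      · rw [if_pos (by rw [h8]), if_pos h8]
      · rw [if_neg (fun hc => h8 (hι hc)), if_neg h8]
    rw [h6]
    by_cases h8 : i = i' <;> simp [h8]
  · -- refinement identity
    intro iv
    ext b c
    have := hkey b c iv
    rw [hC] at this
    simp only at this
    rw [this, Matrix.sum_apply]
    refine Finset.sum_congr rfl fun i _ => ?_
    rfl
  · -- MPS identity
    intro N iv
    have hrw : (fun k : Fin N => (List.ofFn (fun l => A (iv k l))).prod)
        = fun k => ∑ i, W (iv k) i • B i := by
      funext k
      have h2 : ∀ b c, ((List.ofFn (fun l => A (iv k l))).prod) b c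
          = (∑ i, W (iv k) i • B i) b c := by
        intro b c
        rw [show ((List.ofFn (fun l => A (iv k l))).prod) b c = C (iv k) b c from rfl,
          hkey b c (iv k), Matrix.sum_apply]
        refine Finset.sum_congr rfl fun i _ => ?_
        rfl
      exact Matrix.ext h2
    rw [hrw, prod_expand B N (fun k => W (iv k))]
    rw [Matrix.trace_sum]
    refine Finset.sum_congr rfl fun j _ => ?_
    rw [Matrix.trace_smul]
    rfl
end
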